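/- Let Q and Q′ be normal coordinates for germs at 0 of real-analytic hypersurfaces M, M′ ⊂ ℂ², both of finite type at 0, with invariants β₀ and β₀′. If there exists a local biholomorphism H : (ℂ²,0) → (ℂ²,0) satisfying the mapping identity for (Q,Q′), then β₀ = β₀′; that is, β₀ is a biholomorphic invariant. -/

import Mathlib

open Filter Topology Matrix

noncomputable section

/-- Complex conjugation as a plain function. -/
def cj : ℂ → ℂ := (starRingEnd ℂ)

/-- Iterated partial derivative `∂_z^i ∂_w^j F (z, w)` of `F : ℂ → ℂ → ℂ`. -/
def pd (F : ℂ → ℂ → ℂ) (i j : ℕ) (z w : ℂ) : ℂ :=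
  deriv^[i] (fun z' => deriv^[j] (F z') w) z

/-- `Q` is a normal-coordinates defining function (near `0`) of a germ of a
real-analytic hypersurface in `ℂ²`. -/
def IsNormalCoord (Q : ℂ → ℂ → ℂ → ℂ) : Prop :=
  AnalyticAt ℂ (fun p : ℂ × ℂ × ℂ => Q p.1 p.2.1 p.2.2) 0 ∧
  (∀ᶠ p : ℂ × ℂ in 𝓝 0, Q p.1 0 p.2 = p.2) ∧
  (∀ᶠ p : ℂ × ℂ in 𝓝 0, Q 0 p.1 p.2 = p.2) ∧
  (∀ᶠ p : ℂ × ℂ × ℂ in 𝓝 0, Q p.1 p.2.1 (cj (Q (cj p.2.1) (cj p.1) (cj p.2.2))) = p.2.2)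

/-- The mapping identity expressing that the germ at `0` of the holomorphic map
`H = (F, G)` (with `H(0) = 0`) sends the hypersurface defined by `Q` into the one
defined by `Q'`. -/
def SendsInto (Q Q' : ℂ → ℂ → ℂ → ℂ) (F G : ℂ → ℂ → ℂ) : Prop :=
  AnalyticAt ℂ (fun p : ℂ × ℂ => F p.1 p.2) 0 ∧
  AnalyticAt ℂ (fun p : ℂ × ℂ => G p.1 p.2) 0 ∧
  F 0 0 = 0 ∧ G 0 0 = 0 ∧
  ∀ᶠ p : ℂ × ℂ × ℂ in 𝓝 0,
    G p.1 (Q p.1 p.2.1 p.2.2) =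
      Q' (F p.1 (Q p.1 p.2.1 p.2.2)) (cj (F (cj p.2.1) (cj p.2.2))) (cj (G (cj p.2.1) (cj p.2.2)))

/-- Determinant of the Jacobian matrix of `H = (F, G)` at `0`. -/
def JacDet (F G : ℂ → ℂ → ℂ) : ℂ :=
  pd F 1 0 0 0 * pd G 0 1 0 0 - pd F 0 1 0 0 * pd G 1 0 0 0

/-- The hypersurface defined by `Q` is not Levi-flat near `0`, i.e. `Q(z,χ,τ) ≢ τ`. -/
def NotLeviFlat (Q : ℂ → ℂ → ℂ → ℂ) : Prop :=
  ¬ ∀ᶠ p : ℂ × ℂ × ℂ in 𝓝 0, Q p.1 p.2.1 p.2.2 = p.2.2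

/-- The hypersurface defined by `Q` is of finite type at `0`, i.e. `Q(z,χ,0) ≢ 0`. -/
def FiniteTypeAt (Q : ℂ → ℂ → ℂ → ℂ) : Prop :=
  ¬ ∀ᶠ p : ℂ × ℂ in 𝓝 0, Q p.1 p.2 0 = 0

/-- `q_{αμ}(χ) = ∂_z^α ∂_τ^μ Q(0, χ, 0)`. -/
def qd (Q : ℂ → ℂ → ℂ → ℂ) (α μ : ℕ) (χ : ℂ) : ℂ :=
  deriv^[α] (fun z => deriv^[μ] (fun τ => Q z χ τ) 0) 0

/-- The hypersurface (germ) defined by `Q` as a subset of `ℂ²`. -/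
def MSet (Q : ℂ → ℂ → ℂ → ℂ) : Set (ℂ × ℂ) := {p | p.2 = Q p.1 (cj p.1) (cj p.2)}


/-- The Taylor coefficient `r_β(χ, τ)` in the expansion `Q(z,χ,τ) = τ + Σ_{β≥1} r_β(χ,τ) z^β`. -/
def rc (Q : ℂ → ℂ → ℂ → ℂ) (β : ℕ) (χ τ : ℂ) : ℂ :=
  deriv^[β] (fun z => Q z χ τ) 0 / (Nat.factorial β : ℂ)

/-- `β₀` is the invariant of the finite type hypersurface defined by `Q`:
`β₀ = min{β ≥ 1 : r_β(·, 0) ≢ 0}`. -/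
def IsBeta0 (Q : ℂ → ℂ → ℂ → ℂ) (β₀ : ℕ) : Prop :=
  1 ≤ β₀ ∧ (¬ ∀ᶠ χ : ℂ in 𝓝 0, rc Q β₀ χ 0 = 0) ∧
  ∀ β : ℕ, 1 ≤ β → β < β₀ → ∀ᶠ χ : ℂ in 𝓝 0, rc Q β χ 0 = 0


namespace Beta0Aux

lemma cj_cj (z : ℂ) : cj (cj z) = z := Complex.conj_conj z

lemma cj_zero : cj 0 = 0 := map_zero (starRingEnd ℂ)

lemma continuous_cj : Continuous cj := Complex.continuous_conj

lemma cj_eq_zero {z : ℂ} : cj z = 0 ↔ z = 0 := by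
  simp [cj]

lemma norm_cj (z : ℂ) : ‖cj z‖ = ‖z‖ := by
  simp [cj]

lemma deriv_iter_eq_coeff {f : ℂ → ℂ} {p : FormalMultilinearSeries ℂ ℂ ℂ}
    (hp : HasFPowerSeriesAt f p 0) (k : ℕ) :
    deriv^[k] f 0 = (k.factorial : ℂ) * p.coeff k := by
  obtain ⟨r, hr⟩ := hp
  have h1 := hr.factorial_smul (1 : ℂ) k
  rw [← iteratedDeriv_eq_iteratedFDeriv, iteratedDeriv_eq_iterate] at h1
  rw [← h1, nsmul_eq_mul]
  rfl

lemma factor_of_derivs {f : ℂ → ℂ} {m : ℕ} (hf : AnalyticAt ℂ f 0)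
    (h0 : ∀ k, k < m → deriv^[k] f 0 = 0) (hm : deriv^[m] f 0 ≠ 0) :
    ∃ g : ℂ → ℂ, AnalyticAt ℂ g 0 ∧ g 0 ≠ 0 ∧ ∀ᶠ z in 𝓝 0, f z = z ^ m * g z := by
  obtain ⟨p, hp⟩ := hf
  have hcoeff : ∀ k, deriv^[k] f 0 = (k.factorial : ℂ) * p.coeff k :=
    fun k => deriv_iter_eq_coeff hp k
  have hpm : p.coeff m ≠ 0 := by
    intro hc; apply hm; rw [hcoeff m, hc, mul_zero]
  have hpne : p ≠ 0 := by
    intro hc; apply hpm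
    rw [FormalMultilinearSeries.coeff_eq_zero, hc]; rfl
  have horder : p.order = m := by
    refine le_antisymm (Nat.sInf_le ?_) ?_
    · simpa [Set.mem_setOf_eq, ← FormalMultilinearSeries.coeff_eq_zero] using hpm
    · by_contra hlt
      push_neg at hlt
      have h2 := p.apply_order_ne_zero hpne
      have hz : p.coeff p.order = 0 := by
        have h3 := h0 p.order hlt
        rw [hcoeff p.order] at h3
        rcases mul_eq_zero.mp h3 with h | h
        · exact absurd h (by exact_mod_cast (p.order).factorial_ne_zero)
        · exact h
      exact h2 (FormalMultilinearSeries.coeff_eq_zero.mp hz)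
  have h1 : AnalyticAt ℂ ((Function.swap dslope (0:ℂ))^[p.order] f) 0 :=
    ⟨_, hp.has_fpower_series_iterate_dslope_fslope p.order⟩
  have h2 := hp.iterate_dslope_fslope_ne_zero hpne
  have h3 := hp.eq_pow_order_mul_iterate_dslope
  rw [horder] at h1 h2 h3
  refine ⟨_, h1, h2, ?_⟩
  filter_upwards with z
  simpa [smul_eq_mul] using h3 z

lemma hasDerivAt_slice1 {W : ℂ × ℂ → ℂ} {p : ℂ × ℂ} (h : DifferentiableAt ℂ W p) :
    HasDerivAt (fun z => W (z, p.2)) (fderiv ℂ W p (1, 0)) p.1 := by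
  have h' : HasFDerivAt W (fderiv ℂ W p) (p.1, p.2) := by
    simpa using h.hasFDerivAt
  exact h'.comp_hasDerivAt p.1 ((hasDerivAt_id p.1).prodMk (hasDerivAt_const p.1 p.2))

lemma hasDerivAt_slice2 {W : ℂ × ℂ → ℂ} {p : ℂ × ℂ} (h : DifferentiableAt ℂ W p) :
    HasDerivAt (fun w => W (p.1, w)) (fderiv ℂ W p (0, 1)) p.2 := by
  have h' : HasFDerivAt W (fderiv ℂ W p) (p.1, p.2) := by
    simpa using h.hasFDerivAt
  exact h'.comp_hasDerivAt p.2 ((hasDerivAt_const p.2 p.1).prodMk (hasDerivAt_id p.2))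

lemma slice_deriv_iter {W : ℂ × ℂ → ℂ} {s : Set (ℂ × ℂ)} (hs : IsOpen s)
    (hW : AnalyticOnNhd ℂ W s) (β : ℕ) :
    ∃ V : ℂ × ℂ → ℂ, AnalyticOnNhd ℂ V s ∧
      ∀ p ∈ s, deriv^[β] (fun z => W (z, p.2)) p.1 = V p := by
  induction β with
  | zero => exact ⟨W, hW, fun p _ => by simp⟩
  | succ n ih =>
    obtain ⟨V, hV, hVeq⟩ := ih
    refine ⟨fun p => fderiv ℂ V p (1, 0), ?_, ?_⟩
    · exact (ContinuousLinearMap.apply ℂ ℂ ((1:ℂ), (0:ℂ))).comp_analyticOnNhd hV.fderiv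
    · intro p hp
      rw [Function.iterate_succ_apply']
      have hev : (fun z => deriv^[n] (fun z' => W (z', p.2)) z) =ᶠ[𝓝 p.1]
          (fun z => V (z, p.2)) := by
        have hmem : ∀ᶠ z in 𝓝 p.1, (z, p.2) ∈ s := by
          have hc : ContinuousAt (fun z : ℂ => ((z, p.2) : ℂ × ℂ)) p.1 :=
            (continuous_id.prodMk continuous_const).continuousAt
          exact hc.eventually_mem (hs.mem_nhds (by simpa using hp))
        filter_upwards [hmem] with z hz
        exact hVeq (z, p.2) hz
      rw [hev.deriv_eq]
      exact (hasDerivAt_slice1 ((hV _ hp).differentiableAt)).deriv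

lemma slice_deriv_iter' {W : ℂ → ℂ → ℂ} {s : Set (ℂ × ℂ)} (hs : IsOpen s)
    (hW : AnalyticOnNhd ℂ (fun p : ℂ × ℂ => W p.1 p.2) s) (β : ℕ) :
    ∃ V : ℂ × ℂ → ℂ, AnalyticOnNhd ℂ V s ∧
      ∀ z χ : ℂ, (z, χ) ∈ s → deriv^[β] (fun z' => W z' χ) z = V (z, χ) := by
  obtain ⟨V, hV, hVeq⟩ := slice_deriv_iter hs hW β
  exact ⟨V, hV, fun z χ hm => by simpa using hVeq (z, χ) hm⟩

lemma analyticAt_comp' {f : ℂ → ℂ × ℂ} {x : ℂ} {g : ℂ × ℂ → ℂ} {k : ℂ → ℂ}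
    (hf : AnalyticAt ℂ f x) (hg : AnalyticAt ℂ g (f x)) (hk : ∀ z, g (f z) = k z) :
    AnalyticAt ℂ k x := by
  have h1 := hg.comp hf
  have he : (g ∘ f) = k := funext hk
  rwa [he] at h1

lemma analyticAt_comp3 {f : ℂ × ℂ → ℂ × ℂ × ℂ} {x : ℂ × ℂ} {g : ℂ × ℂ × ℂ → ℂ} {k : ℂ × ℂ → ℂ}
    (hf : AnalyticAt ℂ f x) (hg : AnalyticAt ℂ g (f x)) (hk : ∀ p, g (f p) = k p) :
    AnalyticAt ℂ k x := by
  have h1 := hg.comp hf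
  have he : (g ∘ f) = k := funext hk
  rwa [he] at h1

lemma hasDerivAt_cj_comp {f : ℂ → ℂ} {a x : ℂ} (hf : HasDerivAt f a (cj x)) :
    HasDerivAt (fun z => cj (f (cj z))) (cj a) x := by
  rw [hasDerivAt_iff_tendsto] at hf ⊢
  have hcj : Tendsto cj (𝓝 x) (𝓝 (cj x)) := continuous_cj.tendsto x
  have hcomp := hf.comp hcj
  refine hcomp.congr (fun z => ?_)
  have e1 : ‖cj z - cj x‖ = ‖z - x‖ := by
    simp [cj, ← map_sub]
  have e2 : ‖f (cj z) - f (cj x) - (cj z - cj x) • a‖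
      = ‖cj (f (cj z)) - cj (f (cj x)) - (z - x) • cj a‖ := by
    rw [← norm_cj (f (cj z) - f (cj x) - (cj z - cj x) • a)]
    congr 1
    simp only [smul_eq_mul, cj, map_sub, _root_.map_mul, Complex.conj_conj]
  simp only [Function.comp_apply, e1, e2]

lemma analyticAt_cj_comp {f : ℂ → ℂ} (hf : AnalyticAt ℂ f 0) :
    AnalyticAt ℂ (fun z => cj (f (cj z))) 0 := by
  obtain ⟨sm, hsmem, hsall⟩ := hf.eventually_analyticAt.exists_mem
  obtain ⟨t, hts, ht_open, ht0⟩ := mem_nhds_iff.mp hsmem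
  have hpre : IsOpen (cj ⁻¹' t) := ht_open.preimage continuous_cj
  refine DifferentiableOn.analyticAt ?_ (hpre.mem_nhds ?_)
  · intro z hz
    exact ((hasDerivAt_cj_comp
      ((hsall _ (hts hz)).differentiableAt.hasDerivAt)).differentiableAt).differentiableWithinAt
  · simp only [Set.mem_preimage, cj_zero]
    exact ht0

lemma key_bound {Gu : ℂ × ℂ → ℂ} (hG : AnalyticAt ℂ Gu 0)
    (h0 : ∀ᶠ z : ℂ in 𝓝 0, Gu (z, 0) = 0) {ε : ℝ} (hε : 0 < ε) :
    ∀ᶠ p : ℂ × ℂ in 𝓝 0, ‖Gu p - fderiv ℂ Gu 0 (0, 1) * p.2‖ ≤ ε * ‖p.2‖ := by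
  obtain ⟨sm, hsmem, hsall⟩ := hG.eventually_analyticAt.exists_mem
  obtain ⟨s, hsub, hopen, h0s⟩ := mem_nhds_iff.mp hsmem
  have hAn : AnalyticOnNhd ℂ Gu s := fun x hx => hsall x (hsub hx)
  set d : ℂ := fderiv ℂ Gu 0 (0, 1) with hd
  have hD2cont : ContinuousAt (fun p : ℂ × ℂ => fderiv ℂ Gu p ((0:ℂ), (1:ℂ))) 0 := by
    have h1 : AnalyticAt ℂ (fderiv ℂ Gu) 0 := (hAn.fderiv) 0 h0s
    exact ((ContinuousLinearMap.apply ℂ ℂ ((0:ℂ), (1:ℂ))).continuous.continuousAt).comp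
      h1.continuousAt
  have hball : ∀ᶠ p : ℂ × ℂ in 𝓝 0, ‖fderiv ℂ Gu p ((0:ℂ), (1:ℂ)) - d‖ < ε := by
    have ht : Tendsto (fun p : ℂ × ℂ => ‖fderiv ℂ Gu p ((0:ℂ), (1:ℂ)) - d‖) (𝓝 0) (𝓝 0) := by
      have h2 : ContinuousAt (fun p : ℂ × ℂ => ‖fderiv ℂ Gu p ((0:ℂ), (1:ℂ)) - d‖) 0 :=
        (hD2cont.sub (continuousAt_const (y := d))).norm
      simpa [hd] using h2.tendsto
    exact ht.eventually_lt_const hε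
  obtain ⟨δ, hδpos, hδ⟩ := Metric.eventually_nhds_iff_ball.mp
    (hball.and (hopen.eventually_mem h0s))
  obtain ⟨δ₁, hδ₁pos, hδ₁⟩ := Metric.eventually_nhds_iff_ball.mp h0
  rw [Metric.eventually_nhds_iff_ball]
  refine ⟨min δ δ₁, lt_min hδpos hδ₁pos, ?_⟩
  intro p hp
  have hpn : ‖p‖ < min δ δ₁ := by simpa [dist_eq_norm] using hp
  have hp1 : ‖p.1‖ ≤ ‖p‖ := norm_fst_le p
  have hp2 : ‖p.2‖ ≤ ‖p‖ := norm_snd_le p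
  -- membership of path points
  have hmem : ∀ t : ℝ, t ∈ Set.Icc (0:ℝ) 1 →
      ((p.1, t • p.2) : ℂ × ℂ) ∈ Metric.ball (0 : ℂ × ℂ) δ := by
    intro t ht
    rw [Metric.mem_ball, dist_eq_norm, sub_zero]
    have h2 : ‖t • p.2‖ ≤ ‖p.2‖ := by
      rw [norm_smul]
      have : ‖t‖ ≤ 1 := by
        rw [Real.norm_eq_abs, abs_of_nonneg ht.1]; exact ht.2
      calc ‖t‖ * ‖p.2‖ ≤ 1 * ‖p.2‖ := by
            exact mul_le_mul_of_nonneg_right this (norm_nonneg _)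
        _ = ‖p.2‖ := one_mul _
    have : ‖((p.1, t • p.2) : ℂ × ℂ)‖ ≤ ‖p‖ := by
      rw [Prod.norm_def, Prod.norm_def]
      exact max_le_max le_rfl h2
    exact lt_of_le_of_lt this (lt_of_lt_of_le hpn (min_le_left _ _))
  set ψ : ℝ → ℂ := fun t => Gu (p.1, t • p.2) - t • (d * p.2) with hψdef
  have hψder : ∀ t ∈ Set.Icc (0:ℝ) 1,
      HasDerivWithinAt ψ
        (fderiv ℂ Gu (p.1, t • p.2) ((0:ℂ), (1:ℂ)) * p.2 - d * p.2) (Set.Icc 0 1) t := by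
    intro t ht
    have hmemt := hmem t ht
    have hdiff : DifferentiableAt ℂ Gu (p.1, t • p.2) :=
      (hAn _ (hδ _ hmemt).2).differentiableAt
    have hpath : HasDerivAt (fun t : ℝ => ((p.1, t • p.2) : ℂ × ℂ)) ((0:ℂ), p.2) t := by
      have h2 : HasDerivAt (fun t : ℝ => t • p.2) p.2 t := by
        simpa using (hasDerivAt_id t).smul_const p.2
      exact (hasDerivAt_const t p.1).prodMk h2
    have hcomp := (hdiff.hasFDerivAt.restrictScalars ℝ).comp_hasDerivAt t hpath
    have hval : (fderiv ℂ Gu (p.1, t • p.2)).restrictScalars ℝ ((0:ℂ), p.2)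
        = fderiv ℂ Gu (p.1, t • p.2) ((0:ℂ), (1:ℂ)) * p.2 := by
      rw [ContinuousLinearMap.coe_restrictScalars']
      have : ((0:ℂ), p.2) = p.2 • (((0:ℂ), (1:ℂ)) : ℂ × ℂ) := by
        simp [Prod.ext_iff]
      rw [this, _root_.map_smul, smul_eq_mul, mul_comm]
    rw [hval] at hcomp
    have hlin : HasDerivAt (fun t : ℝ => t • (d * p.2)) (d * p.2) t := by
      simpa using (hasDerivAt_id t).smul_const (d * p.2)
    exact (hcomp.sub hlin).hasDerivWithinAt
  have hbound : ∀ t ∈ Set.Ico (0:ℝ) 1,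
      ‖fderiv ℂ Gu (p.1, t • p.2) ((0:ℂ), (1:ℂ)) * p.2 - d * p.2‖ ≤ ε * ‖p.2‖ := by
    intro t ht
    have hmemt := hmem t ⟨ht.1, ht.2.le⟩
    have h1 := (hδ _ hmemt).1
    rw [← sub_mul, norm_mul]
    exact mul_le_mul_of_nonneg_right h1.le (norm_nonneg _)
  have hMVT := norm_image_sub_le_of_norm_deriv_le_segment_01' hψder hbound
  have hψ1 : ψ 1 = Gu p - d * p.2 := by
    simp [hψdef]
  have hψ0 : ψ 0 = 0 := by
    have : Gu (p.1, 0) = 0 := hδ₁ p.1 (by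
      rw [Metric.mem_ball, dist_eq_norm, sub_zero]
      exact lt_of_le_of_lt (le_trans hp1 (le_of_eq rfl)) (lt_of_lt_of_le hpn (min_le_right _ _)))
    simp [hψdef, this]
  rw [hψ1, hψ0, sub_zero] at hMVT
  exact hMVT

end Beta0Aux

open Beta0Aux in
/-- `β₀` is a biholomorphic invariant: if some local biholomorphism
sends `M` into `M'` (both of finite type at `0`), then `β₀ = β₀'`. -/
theorem beta0_is_biholomorphic_invariant
    (Q Q' : ℂ → ℂ → ℂ → ℂ) (hQ : IsNormalCoord Q) (hQ' : IsNormalCoord Q')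
    (hFT : FiniteTypeAt Q) (hFT' : FiniteTypeAt Q')
    (β₀ β₀' : ℕ) (hB : IsBeta0 Q β₀) (hB' : IsBeta0 Q' β₀')
    (F G : ℂ → ℂ → ℂ) (h : SendsInto Q Q' F G) (hb : JacDet F G ≠ 0) :
    β₀ = β₀' := by
  classical
  obtain ⟨hQa, hQn1, hQn2, -⟩ := hQ
  obtain ⟨hQ'a, hQ'n1, hQ'n2, -⟩ := hQ'
  obtain ⟨hFa, hGa, hF0, hG0, hid⟩ := h
  obtain ⟨hβ1, hβne, hβlt⟩ := hB
  obtain ⟨hβ'1, hβ'ne, hβ'lt⟩ := hB'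
  obtain ⟨a, ha_def⟩ : ∃ a : ℂ, a = deriv (fun z : ℂ => F z 0) 0 := ⟨_, rfl⟩
  obtain ⟨b, hb_def⟩ : ∃ b : ℂ, b = deriv (fun w : ℂ => F 0 w) 0 := ⟨_, rfl⟩
  obtain ⟨d, hd_def⟩ : ∃ d : ℂ, d = deriv (fun w : ℂ => G 0 w) 0 := ⟨_, rfl⟩
  -- slices of F and G are analytic
  have hpr0 : AnalyticAt ℂ (fun ζ : ℂ => ((ζ, (0:ℂ)) : ℂ × ℂ)) 0 :=
    analyticAt_id.prod analyticAt_const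
  have hf1 : AnalyticAt ℂ (fun ζ : ℂ => F ζ 0) 0 := (analyticAt_comp' hpr0 hFa (fun _ => rfl))
  have hg1 : AnalyticAt ℂ (fun ζ : ℂ => G ζ 0) 0 := (analyticAt_comp' hpr0 hGa (fun _ => rfl))
  have hva : AnalyticAt ℂ (fun χ : ℂ => cj (F (cj χ) 0)) 0 := analyticAt_cj_comp hf1
  have hv0 : cj (F (cj (0:ℂ)) 0) = 0 := by rw [cj_zero, hF0, cj_zero]
  have hvt : Tendsto (fun χ : ℂ => cj (F (cj χ) 0)) (𝓝 0) (𝓝 0) := by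
    have h1 := hva.continuousAt.tendsto
    rwa [hv0] at h1
  have hua_cont : Tendsto (fun χ : ℂ => cj (G (cj χ) 0)) (𝓝 0) (𝓝 0) := by
    have h2 := (analyticAt_cj_comp hg1).continuousAt.tendsto
    rwa [show cj (G (cj (0:ℂ)) 0) = 0 by rw [cj_zero, hG0, cj_zero]] at h2
  -- the second normalization along slices
  have hk2 : Tendsto (fun χ : ℂ => ((χ, (0:ℂ)) : ℂ × ℂ)) (𝓝 0) (𝓝 0) := by
    have hc : Continuous (fun χ : ℂ => ((χ, (0:ℂ)) : ℂ × ℂ)) := by fun_prop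
    simpa [Prod.mk_zero_zero] using hc.tendsto 0
  have hQ0ev : ∀ᶠ χ : ℂ in 𝓝 0, Q 0 χ 0 = 0 := hk2.eventually hQn2
  -- Step B : G (z, 0) = 0 near 0
  have hu0 : ∀ᶠ χ : ℂ in 𝓝 0, cj (G (cj χ) 0) = 0 := by
    have hk : Tendsto (fun χ : ℂ => (((0:ℂ), χ, (0:ℂ)) : ℂ × ℂ × ℂ)) (𝓝 0) (𝓝 0) := by
      have hc : Continuous (fun χ : ℂ => (((0:ℂ), χ, (0:ℂ)) : ℂ × ℂ × ℂ)) := by fun_prop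
      simpa [Prod.mk_zero_zero] using hc.tendsto 0
    have hid' := hk.eventually hid
    have huv : Tendsto (fun χ : ℂ => ((cj (F (cj χ) 0), cj (G (cj χ) 0)) : ℂ × ℂ))
        (𝓝 0) (𝓝 0) := by
      have := hvt.prodMk_nhds hua_cont
      simpa [Prod.mk_zero_zero] using this
    have hQ'ev := huv.eventually hQ'n2
    filter_upwards [hid', hQ0ev, hQ'ev] with χ h1 h2 h3
    simp only [cj_zero] at h1
    rw [h2, hG0, hF0] at h1
    exact (h1.trans h3).symm
  have hGz0 : ∀ᶠ z : ℂ in 𝓝 0, G z 0 = 0 := by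
    have hcjt : Tendsto cj (𝓝 (0:ℂ)) (𝓝 0) := by
      simpa [cj_zero] using continuous_cj.tendsto (0:ℂ)
    filter_upwards [hcjt.eventually hu0] with z hz
    rw [cj_cj] at hz
    exact cj_eq_zero.mp hz
  -- Step C : the Jacobian determinant
  have hGz_deriv : deriv (fun z : ℂ => G z 0) 0 = 0 := by
    have he : (fun z : ℂ => G z 0) =ᶠ[𝓝 0] (fun _ => (0:ℂ)) := hGz0
    rw [he.deriv_eq, deriv_const]
  have hpdF10 : pd F 1 0 0 0 = a := by rw [ha_def]; simp [pd]
  have hpdF01 : pd F 0 1 0 0 = b := by rw [hb_def]; simp [pd]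
  have hpdG01 : pd G 0 1 0 0 = d := by rw [hd_def]; simp [pd]
  have hpdG10 : pd G 1 0 0 0 = 0 := by
    simp only [pd, Function.iterate_one, Function.iterate_zero, id_eq]
    exact hGz_deriv
  have hJ : JacDet F G = a * d := by
    rw [JacDet, hpdF10, hpdG01, hpdG10, hpdF01, mul_zero, sub_zero]
  have hJ' : a * d ≠ 0 := hJ ▸ hb
  have ha : a ≠ 0 := left_ne_zero_of_mul hJ'
  have hd : d ≠ 0 := right_ne_zero_of_mul hJ'
  -- Step D : analytic families of Taylor coefficients, for Q
  have hpr3 : AnalyticAt ℂ (fun p : ℂ × ℂ => ((p.1, p.2, (0:ℂ)) : ℂ × ℂ × ℂ)) 0 :=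
    analyticAt_fst.prod (analyticAt_snd.prod analyticAt_const)
  have hWQ : AnalyticAt ℂ (fun p : ℂ × ℂ => Q p.1 p.2 0) 0 := (analyticAt_comp3 hpr3 hQa (fun _ => rfl))
  obtain ⟨smQ, hsmQmem, hsmQall⟩ := hWQ.eventually_analyticAt.exists_mem
  obtain ⟨sQ, hsQsub, hsQopen, hsQ0⟩ := mem_nhds_iff.mp hsmQmem
  have hQOn : AnalyticOnNhd ℂ (fun p : ℂ × ℂ => Q p.1 p.2 0) sQ :=
    fun x hx => hsmQall x (hsQsub hx)
  obtain ⟨VQ, hVQan, hVQeq⟩ := slice_deriv_iter' (W := fun z χ : ℂ => Q z χ 0) hsQopen hQOn β₀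
  obtain ⟨VQ1, hVQ1an, hVQ1eq⟩ := slice_deriv_iter' (W := fun z χ : ℂ => Q z χ 0) hsQopen hQOn 1
  have hmemev : ∀ᶠ χ : ℂ in 𝓝 0, (((0:ℂ), χ) : ℂ × ℂ) ∈ sQ := by
    have hc : Continuous (fun χ : ℂ => (((0:ℂ), χ) : ℂ × ℂ)) := by fun_prop
    exact hc.continuousAt.eventually_mem (hsQopen.mem_nhds hsQ0)
  have hpr4 : AnalyticAt ℂ (fun χ : ℂ => (((0:ℂ), χ) : ℂ × ℂ)) 0 :=
    analyticAt_const.prod analyticAt_id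
  have hrcVQ : ∀ᶠ χ : ℂ in 𝓝 0, rc Q β₀ χ 0 = VQ (0, χ) / (Nat.factorial β₀ : ℂ) := by
    filter_upwards [hmemev] with χ hχ
    rw [rc]
    congr 1
    exact hVQeq 0 χ hχ
  have hrcVQ1 : ∀ᶠ χ : ℂ in 𝓝 0, rc Q 1 χ 0 = VQ1 (0, χ) := by
    filter_upwards [hmemev] with χ hχ
    rw [rc, hVQ1eq 0 χ hχ]
    simp
  have hpunctQ : ∀ᶠ χ in 𝓝[≠] (0:ℂ), rc Q β₀ χ 0 ≠ 0 := by
    have hVQan0 : AnalyticAt ℂ (fun χ : ℂ => VQ (0, χ)) 0 :=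
      (analyticAt_comp' hpr4 (hVQan 0 hsQ0) (fun _ => rfl))
    have hdiv : AnalyticAt ℂ (fun χ : ℂ => VQ (0, χ) / (Nat.factorial β₀ : ℂ)) 0 :=
      hVQan0.div analyticAt_const (Nat.cast_ne_zero.mpr β₀.factorial_ne_zero)
    rcases hdiv.eventually_eq_zero_or_eventually_ne_zero with hc | hc
    · exact absurd (by filter_upwards [hrcVQ, hc] with χ h1 h2; rw [h1, h2]) hβne
    · filter_upwards [hc, hrcVQ.filter_mono nhdsWithin_le_nhds] with χ h1 h2
      rw [h2]; exact h1
  -- the β = 1 coefficient family for Q and the non-degeneracy of the slope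
  have hVQ1at0 : VQ1 (0, 0) = 0 := by
    rw [← hVQ1eq 0 0 hsQ0]
    have h2 : ∀ᶠ z : ℂ in 𝓝 0, Q z 0 0 = 0 := by
      have hk : Tendsto (fun z : ℂ => ((z, (0:ℂ)) : ℂ × ℂ)) (𝓝 0) (𝓝 0) := by
        have hc : Continuous (fun z : ℂ => ((z, (0:ℂ)) : ℂ × ℂ)) := by fun_prop
        simpa [Prod.mk_zero_zero] using hc.tendsto 0
      exact hk.eventually hQn1
    have he : (fun z : ℂ => Q z 0 0) =ᶠ[𝓝 0] (fun _ => (0:ℂ)) := h2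
    rw [Function.iterate_one, he.deriv_eq, deriv_const]
  have hSlopeNe : ∀ᶠ χ : ℂ in 𝓝 0, a + rc Q 1 χ 0 * b ≠ 0 := by
    have h2 : AnalyticAt ℂ (fun χ : ℂ => VQ1 (0, χ)) 0 := (analyticAt_comp' hpr4 (hVQ1an 0 hsQ0) (fun _ => rfl))
    have hcont : ContinuousAt (fun χ : ℂ => a + VQ1 (0, χ) * b) 0 :=
      continuousAt_const.add (h2.continuousAt.mul continuousAt_const)
    have hval : a + VQ1 (0, 0) * b ≠ 0 := by
      rw [hVQ1at0, zero_mul, add_zero]; exact ha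
    filter_upwards [hcont.eventually_ne hval, hrcVQ1] with χ h1 h2
    rw [h2]; exact h1
  -- analytic families of Taylor coefficients, for Q'
  have hWQ' : AnalyticAt ℂ (fun p : ℂ × ℂ => Q' p.1 p.2 0) 0 := (analyticAt_comp3 hpr3 hQ'a (fun _ => rfl))
  obtain ⟨smQ', hsmQ'mem, hsmQ'all⟩ := hWQ'.eventually_analyticAt.exists_mem
  obtain ⟨sQ', hsQ'sub, hsQ'open, hsQ'0⟩ := mem_nhds_iff.mp hsmQ'mem
  have hQ'On : AnalyticOnNhd ℂ (fun p : ℂ × ℂ => Q' p.1 p.2 0) sQ' :=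
    fun x hx => hsmQ'all x (hsQ'sub hx)
  obtain ⟨VQ', hVQ'an, hVQ'eq⟩ :=
    slice_deriv_iter' (W := fun z χ : ℂ => Q' z χ 0) hsQ'open hQ'On β₀'
  have hmemev' : ∀ᶠ ζ : ℂ in 𝓝 0, (((0:ℂ), ζ) : ℂ × ℂ) ∈ sQ' := by
    have hc : Continuous (fun ζ : ℂ => (((0:ℂ), ζ) : ℂ × ℂ)) := by fun_prop
    exact hc.continuousAt.eventually_mem (hsQ'open.mem_nhds hsQ'0)
  have hrcVQ' : ∀ᶠ ζ : ℂ in 𝓝 0, rc Q' β₀' ζ 0 = VQ' (0, ζ) / (Nat.factorial β₀' : ℂ) := by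
    filter_upwards [hmemev'] with ζ hζ
    rw [rc]
    congr 1
    exact hVQ'eq 0 ζ hζ
  have hpunctQ' : ∀ᶠ ζ in 𝓝[≠] (0:ℂ), rc Q' β₀' ζ 0 ≠ 0 := by
    have hVQ'an0 : AnalyticAt ℂ (fun ζ : ℂ => VQ' (0, ζ)) 0 := (analyticAt_comp' hpr4 (hVQ'an 0 hsQ'0) (fun _ => rfl))
    have hdiv : AnalyticAt ℂ (fun ζ : ℂ => VQ' (0, ζ) / (Nat.factorial β₀' : ℂ)) 0 :=
      hVQ'an0.div analyticAt_const (Nat.cast_ne_zero.mpr β₀'.factorial_ne_zero)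
    rcases hdiv.eventually_eq_zero_or_eventually_ne_zero with hc | hc
    · exact absurd (by filter_upwards [hrcVQ', hc] with ζ h1 h2; rw [h1, h2]) hβ'ne
    · filter_upwards [hc, hrcVQ'.filter_mono nhdsWithin_le_nhds] with ζ h1 h2
      rw [h2]; exact h1
  -- facts about v = conj ∘ F(·,0) ∘ conj
  have hvd : HasDerivAt (fun χ : ℂ => cj (F (cj χ) 0)) (cj a) 0 := by
    have h1 : HasDerivAt (fun ζ : ℂ => F ζ 0) a (cj 0) := by
      rw [cj_zero, ha_def]
      exact hf1.differentiableAt.hasDerivAt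
    exact hasDerivAt_cj_comp h1
  have hcja : cj a ≠ 0 := fun hc => ha (cj_eq_zero.mp hc)
  have hvne : ∀ᶠ χ in 𝓝[≠] (0:ℂ), cj (F (cj χ) 0) ≠ 0 := by
    obtain ⟨g0, hg0a, hg00, hg0fac⟩ := factor_of_derivs (m := 1) hva
      (by intro k hk; interval_cases k; simpa using hv0)
      (by simp only [Function.iterate_one]; rw [hvd.deriv]; exact hcja)
    have hgne : ∀ᶠ χ in 𝓝 (0:ℂ), g0 χ ≠ 0 := hg0a.continuousAt.eventually_ne hg00
    rw [eventually_nhdsWithin_iff]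
    filter_upwards [hg0fac, hgne] with χ h1 h2 h3
    have h1' : cj (F (cj χ) 0) = χ ^ 1 * g0 χ := h1
    rw [h1', pow_one]
    exact mul_ne_zero (by simpa using h3) h2
  have hvtp : Tendsto (fun χ : ℂ => cj (F (cj χ) 0)) (𝓝[≠] (0:ℂ)) (𝓝[≠] (0:ℂ)) := by
    rw [tendsto_nhdsWithin_iff]
    constructor
    · exact hvt.mono_left nhdsWithin_le_nhds
    · filter_upwards [hvne] with χ h1
      simpa using h1
  -- extract an open set where the mapping identity holds
  obtain ⟨U, hUP, hUopen, hU0⟩ := eventually_nhds_iff.mp hid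
  have hA1ev : ∀ᶠ χ : ℂ in 𝓝 0, (((0:ℂ), χ, (0:ℂ)) : ℂ × ℂ × ℂ) ∈ U := by
    have hc : Continuous (fun χ : ℂ => (((0:ℂ), χ, (0:ℂ)) : ℂ × ℂ × ℂ)) := by fun_prop
    exact hc.continuousAt.eventually_mem (hUopen.mem_nhds hU0)
  -- low order coefficients vanish identically
  have hA3ev : ∀ᶠ χ : ℂ in 𝓝 0, ∀ β ∈ Finset.range β₀, 1 ≤ β → rc Q β χ 0 = 0 := by
    rw [Filter.eventually_all_finset]
    intro β hβ
    by_cases h1 : 1 ≤ β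
    · filter_upwards [hβlt β h1 (Finset.mem_range.mp hβ)] with χ hχ _
      exact hχ
    · exact Filter.Eventually.of_forall fun χ h2 => absurd h2 h1
  have hA3ev' : ∀ᶠ ζ : ℂ in 𝓝 0, ∀ β ∈ Finset.range β₀', 1 ≤ β → rc Q' β ζ 0 = 0 := by
    rw [Filter.eventually_all_finset]
    intro β hβ
    by_cases h1 : 1 ≤ β
    · filter_upwards [hβ'lt β h1 (Finset.mem_range.mp hβ)] with ζ hζ _
      exact hζ
    · exact Filter.Eventually.of_forall fun ζ h2 => absurd h2 h1
  have hA11ev : ∀ᶠ χ : ℂ in 𝓝 0, Q' 0 (cj (F (cj χ) 0)) 0 = 0 := by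
    have hk3 : Tendsto (fun χ : ℂ => ((cj (F (cj χ) 0), (0:ℂ)) : ℂ × ℂ)) (𝓝 0) (𝓝 0) := by
      have := hvt.prodMk_nhds (tendsto_const_nhds : Tendsto (fun _ : ℂ => (0:ℂ)) (𝓝 0) (𝓝 0))
      simpa [Prod.mk_zero_zero] using this
    exact hk3.eventually hQ'n2
  -- choose a good parameter χ₀
  have base1 := hA1ev.and (hu0.and (hA3ev.and (hSlopeNe.and (hQ0ev.and (hA11ev.and
      ((hvt.eventually hA3ev').and ((hvt.eventually hmemev').and hmemev)))))))
  have hall := (base1.filter_mono nhdsWithin_le_nhds).and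
      (hpunctQ.and (hvtp.eventually hpunctQ'))
  obtain ⟨χ₀, ⟨hA1, hA2, hA3, hA7, hA10, hA11, hA5, hA9, hA8⟩, hA4, hA6⟩ := hall.exists
  -- the sliced function q(z) = Q(z, χ₀, 0) and its factorization
  have hQatc : AnalyticAt ℂ (fun p : ℂ × ℂ => Q p.1 p.2 0) (0, χ₀) := hQOn _ hA8
  have hpr5 : AnalyticAt ℂ (fun z : ℂ => ((z, χ₀) : ℂ × ℂ)) 0 :=
    analyticAt_id.prod analyticAt_const
  have hqa : AnalyticAt ℂ (fun z : ℂ => Q z χ₀ 0) 0 := (analyticAt_comp' hpr5 hQatc (fun _ => rfl))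
  have hqd0 : ∀ k, k < β₀ → deriv^[k] (fun z : ℂ => Q z χ₀ 0) 0 = 0 := by
    intro k hk
    rcases Nat.eq_zero_or_pos k with rfl | hk1
    · simpa using hA10
    · have h2 := hA3 k (Finset.mem_range.mpr hk) hk1
      rw [rc] at h2
      rcases div_eq_zero_iff.mp h2 with h3 | h3
      · exact h3
      · exact absurd h3 (Nat.cast_ne_zero.mpr k.factorial_ne_zero)
  have hqdm : deriv^[β₀] (fun z : ℂ => Q z χ₀ 0) 0 ≠ 0 := by
    intro hc
    apply hA4
    rw [rc, hc, zero_div]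
  obtain ⟨u, hua, hu0ne, hufac⟩ := factor_of_derivs hqa hqd0 hqdm
  -- the function S(z) = F(z, q(z)) and its factorization
  have hqten : Tendsto (fun z : ℂ => Q z χ₀ 0) (𝓝 0) (𝓝 0) := by
    have h1 := hqa.continuousAt.tendsto
    rwa [hA10] at h1
  have hSa : AnalyticAt ℂ (fun z : ℂ => F z (Q z χ₀ 0)) 0 := by
    have h2 : AnalyticAt ℂ (fun z : ℂ => ((z, Q z χ₀ 0) : ℂ × ℂ)) 0 := analyticAt_id.prod hqa
    have h3 : AnalyticAt ℂ (fun p : ℂ × ℂ => F p.1 p.2) ((0:ℂ), Q 0 χ₀ 0) := by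
      rw [hA10]; exact hFa
    exact (analyticAt_comp' h2 h3 (fun _ => rfl))
  have hS0 : F 0 (Q 0 χ₀ 0) = 0 := by rw [hA10, hF0]
  have hqderiv1 : deriv (fun z : ℂ => Q z χ₀ 0) 0 = rc Q 1 χ₀ 0 := by
    rw [rc]; simp
  have hSd : HasDerivAt (fun z : ℂ => F z (Q z χ₀ 0)) (a + rc Q 1 χ₀ 0 * b) 0 := by
    have hpath : HasDerivAt (fun z : ℂ => ((z, Q z χ₀ 0) : ℂ × ℂ))
        ((1:ℂ), deriv (fun z : ℂ => Q z χ₀ 0) 0) 0 :=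
      (hasDerivAt_id 0).prodMk hqa.differentiableAt.hasDerivAt
    have hFd : HasFDerivAt (fun p : ℂ × ℂ => F p.1 p.2)
        (fderiv ℂ (fun p : ℂ × ℂ => F p.1 p.2) 0) ((0:ℂ), Q 0 χ₀ 0) := by
      rw [hA10]
      exact hFa.differentiableAt.hasFDerivAt
    have hcomp := hFd.comp_hasDerivAt 0 hpath
    have hsplit : fderiv ℂ (fun p : ℂ × ℂ => F p.1 p.2) 0
        ((1:ℂ), deriv (fun z : ℂ => Q z χ₀ 0) 0) = a + rc Q 1 χ₀ 0 * b := by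
      have he : (((1:ℂ), deriv (fun z : ℂ => Q z χ₀ 0) 0) : ℂ × ℂ)
          = (((1:ℂ), (0:ℂ)) : ℂ × ℂ)
            + deriv (fun z : ℂ => Q z χ₀ 0) 0 • (((0:ℂ), (1:ℂ)) : ℂ × ℂ) := by
        simp [Prod.ext_iff]
      rw [he, _root_.map_add, _root_.map_smul, smul_eq_mul]
      congr 1
      · rw [ha_def]
        have h9 := (hasDerivAt_slice1 (W := fun p : ℂ × ℂ => F p.1 p.2)
          (p := (0 : ℂ × ℂ)) hFa.differentiableAt).deriv
        simpa using h9.symm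
      · rw [hqderiv1, hb_def]
        congr 1
        have h9 := (hasDerivAt_slice2 (W := fun p : ℂ × ℂ => F p.1 p.2)
          (p := (0 : ℂ × ℂ)) hFa.differentiableAt).deriv
        simpa using h9.symm
    rw [hsplit] at hcomp
    exact hcomp
  have hSderiv_ne : deriv (fun z : ℂ => F z (Q z χ₀ 0)) 0 ≠ 0 := by
    rw [hSd.deriv]; exact hA7
  obtain ⟨s1, hs1a, hs10, hs1fac⟩ := factor_of_derivs (m := 1) hSa
    (by intro k hk; interval_cases k; simpa using hS0)
    (by simp only [Function.iterate_one]; exact hSderiv_ne)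
  -- the sliced function q'(ζ) = Q'(ζ, v(χ₀), 0) and its factorization
  have hQ'atc : AnalyticAt ℂ (fun p : ℂ × ℂ => Q' p.1 p.2 0) (0, cj (F (cj χ₀) 0)) :=
    hQ'On _ hA9
  have hpr6 : AnalyticAt ℂ (fun ζ : ℂ => ((ζ, cj (F (cj χ₀) 0)) : ℂ × ℂ)) 0 :=
    analyticAt_id.prod analyticAt_const
  have hq'a : AnalyticAt ℂ (fun ζ : ℂ => Q' ζ (cj (F (cj χ₀) 0)) 0) 0 := (analyticAt_comp' hpr6 hQ'atc (fun _ => rfl))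
  have hq'd0 : ∀ k, k < β₀' → deriv^[k] (fun ζ : ℂ => Q' ζ (cj (F (cj χ₀) 0)) 0) 0 = 0 := by
    intro k hk
    rcases Nat.eq_zero_or_pos k with rfl | hk1
    · simpa using hA11
    · have h2 : rc Q' k (cj (F (cj χ₀) 0)) 0 = 0 := hA5 k (Finset.mem_range.mpr hk) hk1
      rw [rc] at h2
      rcases div_eq_zero_iff.mp h2 with h3 | h3
      · exact h3
      · exact absurd h3 (Nat.cast_ne_zero.mpr k.factorial_ne_zero)
  have hq'dm : deriv^[β₀'] (fun ζ : ℂ => Q' ζ (cj (F (cj χ₀) 0)) 0) 0 ≠ 0 := by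
    intro hc
    apply hA6
    show rc Q' β₀' (cj (F (cj χ₀) 0)) 0 = 0
    rw [rc, hc, zero_div]
  obtain ⟨g, hga, hg0, hgfac⟩ := factor_of_derivs hq'a hq'd0 hq'dm
  -- the mapping identity along the slice χ = χ₀, τ = 0
  have hLR : ∀ᶠ z : ℂ in 𝓝 0,
      G z (Q z χ₀ 0) = Q' (F z (Q z χ₀ 0)) (cj (F (cj χ₀) 0)) 0 := by
    have hevz : ∀ᶠ z : ℂ in 𝓝 0, ((z, χ₀, (0:ℂ)) : ℂ × ℂ × ℂ) ∈ U := by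
      have hc : Continuous (fun z : ℂ => ((z, χ₀, (0:ℂ)) : ℂ × ℂ × ℂ)) := by fun_prop
      exact hc.continuousAt.eventually_mem (hUopen.mem_nhds hA1)
    filter_upwards [hevz] with z hz
    have h1 := hUP _ hz
    simp only [cj_zero] at h1
    rw [hA2] at h1
    exact h1
  -- limit of the right-hand side
  have hSten : Tendsto (fun z : ℂ => F z (Q z χ₀ 0)) (𝓝 0) (𝓝 0) := by
    have h1 := hSa.continuousAt.tendsto
    rwa [hS0] at h1
  have hRfac : ∀ᶠ z : ℂ in 𝓝 0,
      Q' (F z (Q z χ₀ 0)) (cj (F (cj χ₀) 0)) 0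
        = (F z (Q z χ₀ 0)) ^ β₀' * g (F z (Q z χ₀ 0)) := hSten.eventually hgfac
  have hbcont : Tendsto (fun z : ℂ => s1 z ^ β₀' * g (F z (Q z χ₀ 0))) (𝓝 0)
      (𝓝 (s1 0 ^ β₀' * g 0)) :=
    (hs1a.continuousAt.tendsto.pow β₀').mul (hga.continuousAt.tendsto.comp hSten)
  have hB0ne : s1 0 ^ β₀' * g 0 ≠ 0 := mul_ne_zero (pow_ne_zero _ hs10) hg0
  have hT2 : Tendsto (fun z : ℂ => G z (Q z χ₀ 0) / z ^ β₀') (𝓝[≠] 0)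
      (𝓝 (s1 0 ^ β₀' * g 0)) := by
    refine Tendsto.congr' ?_ (hbcont.mono_left nhdsWithin_le_nhds)
    filter_upwards [(hLR.and (hRfac.and hs1fac)).filter_mono nhdsWithin_le_nhds,
      self_mem_nhdsWithin] with z hz hz0
    obtain ⟨h1, h2, h3⟩ := hz
    have hzne : (z:ℂ) ≠ 0 := by simpa using hz0
    have h3' : F z (Q z χ₀ 0) = z ^ 1 * s1 z := h3
    rw [h1, h2]
    have h4 : (F z (Q z χ₀ 0)) ^ β₀' = z ^ β₀' * s1 z ^ β₀' := by
      rw [h3', pow_one, mul_pow]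
    rw [h4, mul_assoc, mul_div_cancel_left₀ _ (pow_ne_zero β₀' hzne)]
  -- limit of the left-hand side
  have hfd' : d = fderiv ℂ (fun p : ℂ × ℂ => G p.1 p.2) 0 ((0:ℂ), (1:ℂ)) := by
    rw [hd_def]
    have h9 := (hasDerivAt_slice2 (W := fun p : ℂ × ℂ => G p.1 p.2)
      (p := (0 : ℂ × ℂ)) hGa.differentiableAt).deriv
    simpa using h9
  have hqpairt : Tendsto (fun z : ℂ => ((z, Q z χ₀ 0) : ℂ × ℂ)) (𝓝 0) (𝓝 0) := by
    have := tendsto_id.prodMk_nhds hqten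
    simpa [Prod.mk_zero_zero] using this
  have hkey : ∀ ε : ℝ, 0 < ε → ∀ᶠ z : ℂ in 𝓝 0,
      ‖G z (Q z χ₀ 0) - d * Q z χ₀ 0‖ ≤ ε * ‖Q z χ₀ 0‖ := by
    intro ε hε
    have hkb := key_bound hGa hGz0 hε
    filter_upwards [hqpairt.eventually hkb] with z hz
    rw [hfd']
    simpa using hz
  have hucont : Tendsto u (𝓝 (0:ℂ)) (𝓝 (u 0)) := hua.continuousAt.tendsto
  have hT1 : Tendsto (fun z : ℂ => G z (Q z χ₀ 0) / z ^ β₀) (𝓝[≠] 0) (𝓝 (d * u 0)) := by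
    have h1 : Tendsto (fun z : ℂ => (G z (Q z χ₀ 0) - d * Q z χ₀ 0) / z ^ β₀)
        (𝓝[≠] 0) (𝓝 0) := by
      rw [NormedAddCommGroup.tendsto_nhds_zero]
      intro ε hε
      have hupos : (0:ℝ) < ‖u 0‖ + 1 := by positivity
      have hε' : 0 < ε / 2 / (‖u 0‖ + 1) := by positivity
      have hub : ∀ᶠ z : ℂ in 𝓝 0, ‖u z‖ < ‖u 0‖ + 1 :=
        hucont.norm.eventually_lt_const (by linarith)
      filter_upwards [((hkey _ hε').and (hufac.and hub)).filter_mono nhdsWithin_le_nhds,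
        self_mem_nhdsWithin] with z hz hz0
      obtain ⟨hk1, hk2, hk3⟩ := hz
      have hzne : (z:ℂ) ≠ 0 := by simpa using hz0
      have hk2' : Q z χ₀ 0 = z ^ β₀ * u z := hk2
      have hq_norm : ‖Q z χ₀ 0‖ = ‖z‖ ^ β₀ * ‖u z‖ := by
        rw [hk2', norm_mul, norm_pow]
      have hzpow : (0:ℝ) < ‖z‖ ^ β₀ := by
        have : (0:ℝ) < ‖z‖ := norm_pos_iff.mpr hzne
        positivity
      rw [norm_div, norm_pow, div_lt_iff₀ hzpow]
      calc ‖G z (Q z χ₀ 0) - d * Q z χ₀ 0‖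
          ≤ ε / 2 / (‖u 0‖ + 1) * ‖Q z χ₀ 0‖ := hk1
        _ = ε / 2 / (‖u 0‖ + 1) * ‖u z‖ * ‖z‖ ^ β₀ := by rw [hq_norm]; ring
        _ < ε * ‖z‖ ^ β₀ := by
            apply mul_lt_mul_of_pos_right ?_ hzpow
            calc ε / 2 / (‖u 0‖ + 1) * ‖u z‖
                ≤ ε / 2 / (‖u 0‖ + 1) * (‖u 0‖ + 1) :=
                  mul_le_mul_of_nonneg_left hk3.le hε'.le
              _ = ε / 2 := div_mul_cancel₀ _ (ne_of_gt hupos)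
              _ < ε := by linarith
    have h2 : Tendsto (fun z : ℂ => d * u z) (𝓝[≠] (0:ℂ)) (𝓝 (d * u 0)) :=
      (hucont.const_mul d).mono_left nhdsWithin_le_nhds
    have h3 := h1.add h2
    rw [zero_add] at h3
    refine Tendsto.congr' ?_ h3
    filter_upwards [hufac.filter_mono nhdsWithin_le_nhds, self_mem_nhdsWithin] with z h4 hz0
    have hzne : (z:ℂ) ≠ 0 := by simpa using hz0
    have h4' : Q z χ₀ 0 = z ^ β₀ * u z := h4
    rw [h4']
    field_simp
    ring
  have hdu0 : d * u 0 ≠ 0 := mul_ne_zero hd hu0ne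
  -- conclusion
  rcases Nat.lt_trichotomy β₀ β₀' with hlt | heq | hgt
  · exfalso
    have hzp : Tendsto (fun z : ℂ => z ^ (β₀' - β₀)) (𝓝[≠] (0:ℂ)) (𝓝 0) := by
      have h5 := ((continuous_pow (β₀' - β₀)).tendsto (0:ℂ)).mono_left
        (nhdsWithin_le_nhds (s := {(0:ℂ)}ᶜ))
      rwa [zero_pow (Nat.sub_ne_zero_of_lt hlt)] at h5
    have h6 := hT2.mul hzp
    rw [mul_zero] at h6
    have h7 : Tendsto (fun z : ℂ => G z (Q z χ₀ 0) / z ^ β₀) (𝓝[≠] 0) (𝓝 0) := by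
      refine Tendsto.congr' ?_ h6
      filter_upwards [self_mem_nhdsWithin] with z hz0
      have hzne : (z:ℂ) ≠ 0 := by simpa using hz0
      have hsplit : (z:ℂ) ^ β₀' = z ^ β₀ * z ^ (β₀' - β₀) := by
        rw [← pow_add, Nat.add_sub_cancel' hlt.le]
      rw [hsplit]
      field_simp
    exact hdu0 (tendsto_nhds_unique hT1 h7)
  · exact heq
  · exfalso
    have hzp : Tendsto (fun z : ℂ => z ^ (β₀ - β₀')) (𝓝[≠] (0:ℂ)) (𝓝 0) := by
      have h5 := ((continuous_pow (β₀ - β₀')).tendsto (0:ℂ)).mono_left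
        (nhdsWithin_le_nhds (s := {(0:ℂ)}ᶜ))
      rwa [zero_pow (Nat.sub_ne_zero_of_lt hgt)] at h5
    have h6 := hT1.mul hzp
    rw [mul_zero] at h6
    have h7 : Tendsto (fun z : ℂ => G z (Q z χ₀ 0) / z ^ β₀') (𝓝[≠] 0) (𝓝 0) := by
      refine Tendsto.congr' ?_ h6
      filter_upwards [self_mem_nhdsWithin] with z hz0
      have hzne : (z:ℂ) ≠ 0 := by simpa using hz0
      have hsplit : (z:ℂ) ^ β₀ = z ^ β₀' * z ^ (β₀ - β₀') := by
        rw [← pow_add, Nat.add_sub_cancel' hgt.le]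
      rw [hsplit]
      field_simp
    exact hB0ne (tendsto_nhds_unique hT2 h7)
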